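/- In the two-stage adversarial training with infinitely many generated data, if the known noise variance σ² is replaced by an estimate σ̂² > 0, then the second-stage estimator equals θ̂₀(λ)/(1+α) where the stationary parameter α = α_ε(λ) ≥ 0 solves α + ε c₀ α ‖θ̂₀(λ)‖₂ / √( ‖θ̂₀(λ)‖₂² α² + σ̂² (1+α)² ) = ε c₀ √( ‖θ̂₀(λ)‖₂² α² + σ̂² (1+α)² ) / ‖θ̂₀(λ)‖₂ + ε², i.e. the same fixed-point equation with σ² replaced by σ̂². -/

import Mathlib

set_option maxHeartbeats 1000000


open scoped RealInnerProductSpace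

/-- The population adversarial risk of `θ` when pseudo-responses are generated from the base
model `b` with (estimated) noise variance `v` and standard Gaussian features
(`c₀ = √(2/π)`). -/
noncomputable def advRisk {d : ℕ} (ε v : ℝ) (b θ : EuclideanSpace ℝ (Fin d)) : ℝ :=
  ‖θ - b‖ ^ 2 + v + 2 * Real.sqrt (2 / Real.pi) * ε * ‖θ‖ *
    Real.sqrt (‖θ - b‖ ^ 2 + v) + ε ^ 2 * ‖θ‖ ^ 2

/-- In the two-stage adversarial training with infinitely many generated
data, if the known noise variance `σ²` is replaced by an estimate `σ̂² > 0`, the second-stage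
estimator equals `θ̂₀(λ)/(1+α)`, where `α ≥ 0` solves the same fixed-point equation with `σ²`
replaced by `σ̂²`:
`α + εc₀α‖θ̂₀‖/√(‖θ̂₀‖²α² + σ̂²(1+α)²) = εc₀√(‖θ̂₀‖²α² + σ̂²(1+α)²)/‖θ̂₀‖ + ε²`. -/
theorem two_stage_estimated_variance_minimizer (d : ℕ) (θhat : EuclideanSpace ℝ (Fin d))
    (hθhat : θhat ≠ 0) (ε σhat2 α : ℝ) (hε : 0 < ε) (hσhat2 : 0 < σhat2) (hα : 0 ≤ α)
    (hfix : α + ε * Real.sqrt (2 / Real.pi) * (α * ‖θhat‖)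
          / Real.sqrt (‖θhat‖ ^ 2 * α ^ 2 + σhat2 * (1 + α) ^ 2)
      = ε * Real.sqrt (2 / Real.pi)
          * Real.sqrt (‖θhat‖ ^ 2 * α ^ 2 + σhat2 * (1 + α) ^ 2) / ‖θhat‖ + ε ^ 2) :
    ∀ θ : EuclideanSpace ℝ (Fin d),
      advRisk ε σhat2 θhat ((1 / (1 + α)) • θhat) ≤ advRisk ε σhat2 θhat θ := by
  intro θ
  have hπ : 0 < Real.pi := Real.pi_pos
  set t : ℝ := ‖θhat‖ with ht_def
  have ht : 0 < t := norm_pos_iff.mpr hθhat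
  set c : ℝ := Real.sqrt (2 / Real.pi) with hc_def
  have hc_pos : 0 < c := Real.sqrt_pos.mpr (by positivity)
  have hc2 : c ^ 2 = 2 / Real.pi := Real.sq_sqrt (by positivity)
  have hc2le : c ^ 2 ≤ 1 := by
    rw [hc2, div_le_one hπ]; linarith [Real.pi_gt_three]
  have h1α : (0:ℝ) < 1 + α := by linarith
  set S : ℝ := Real.sqrt (t ^ 2 * α ^ 2 + σhat2 * (1 + α) ^ 2) with hS_def
  have hSarg : (0:ℝ) < t ^ 2 * α ^ 2 + σhat2 * (1 + α) ^ 2 := by positivity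
  have hS : 0 < S := Real.sqrt_pos.mpr hSarg
  have hS2 : S ^ 2 = t ^ 2 * α ^ 2 + σhat2 * (1 + α) ^ 2 := Real.sq_sqrt hSarg.le
  -- cleared form of the fixed-point equation
  have E1 : α * t * S + c * ε * α * t ^ 2 = c * ε * S ^ 2 + ε ^ 2 * t * S := by
    have h := hfix
    field_simp at h
    linarith [h]
  -- scalar data for the competitor θ
  set n : ℝ := ‖θ‖ with hn_def
  set m : ℝ := ‖θ - θhat‖ with hm_def
  set u : ℝ := (inner ℝ θ θhat : ℝ) with hu_def
  set X : ℝ := Real.sqrt (m ^ 2 + σhat2) with hX_def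
  have hn0 : 0 ≤ n := norm_nonneg _
  have hm0 : 0 ≤ m := norm_nonneg _
  have hX0 : 0 ≤ X := Real.sqrt_nonneg _
  have hX2 : X ^ 2 = m ^ 2 + σhat2 := Real.sq_sqrt (by positivity)
  have hu_le : u ≤ n * t := real_inner_le_norm θ θhat
  have hinner : (inner ℝ (θ - θhat) θhat : ℝ) = u - t ^ 2 := by
    rw [inner_sub_left, real_inner_self_eq_norm_sq]
  have hF1 : -(m * t) ≤ u - t ^ 2 := by
    have h := abs_real_inner_le_norm (θ - θhat) θhat
    rw [hinner] at h
    have := abs_le.mp h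
    linarith [this.1]
  -- 2D Cauchy-Schwarz
  have hCS2 : m * (α * t) + σhat2 * (1 + α) ≤ X * S := by
    have hXS : X * S
        = Real.sqrt ((m ^ 2 + σhat2) * (t ^ 2 * α ^ 2 + σhat2 * (1 + α) ^ 2)) := by
      rw [Real.sqrt_mul (by positivity)]
    rw [hXS]
    rw [Real.le_sqrt (by positivity) (by positivity)]
    nlinarith [mul_nonneg hσhat2.le (sq_nonneg (m * (1 + α) - α * t))]
  have hbr1 : -α * (u - t ^ 2) + σhat2 * (1 + α) ≤ X * S := by
    have h2 := mul_le_mul_of_nonneg_left hF1 hα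
    linarith [hCS2, h2]
  -- key polynomial identity (stationarity of the minimizer)
  have hkeyN : (1 + α) * t * (S + c * ε * t) * (-α * (u - t ^ 2) + σhat2 * (1 + α))
      + (1 + α) * c * ε * u * S * (S + c * ε * t)
      - t * S * (S + c * ε * t) ^ 2
      + (1 - c ^ 2) * ε ^ 2 * (1 + α) * t * S * u
      - (1 - c ^ 2) * ε ^ 2 * t ^ 3 * S = 0 := by
    linear_combination (t ^ 2 - (1 + α) * u) * E1 + (-(t * (S + c * ε * t))) * hS2
  -- positivity pieces
  have p1 : 0 ≤ (1 + α) * t * (S + c * ε * t)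
      * (X * S - (-α * (u - t ^ 2) + σhat2 * (1 + α))) := by
    apply mul_nonneg (by positivity)
    linarith [hbr1]
  have p2 : 0 ≤ (1 + α) * c * ε * (S + c * ε * t) * S * (n * t - u) := by
    apply mul_nonneg (by positivity)
    linarith [hu_le]
  have hc2' : 0 ≤ 1 - c ^ 2 := by linarith
  have p3 : 0 ≤ (1 - c ^ 2) * ε ^ 2 * (1 + α) * t * S * (n * t - u) := by
    apply mul_nonneg (by positivity)
    linarith [hu_le]
  have claim5 : 0 ≤ (1 + α) * t * S * (S + c * ε * t) * (X + c * ε * n)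
      - t * S * (S + c * ε * t) ^ 2
      + (1 - c ^ 2) * ε ^ 2 * (1 + α) * t ^ 2 * n * S
      - (1 - c ^ 2) * ε ^ 2 * t ^ 3 * S := by
    linarith [hkeyN, p1, p2, p3]
  -- convexity gap terms
  have q1 : 0 ≤ t * S * ((1 + α) * (X + c * ε * n) - (S + c * ε * t)) ^ 2 := by positivity
  have q2 : 0 ≤ (1 - c ^ 2) * ε ^ 2 * t * S * ((1 + α) * n - t) ^ 2 := by positivity
  have hmain : (S ^ 2 + 2 * c * ε * t * S + ε ^ 2 * t ^ 2) * (t * S)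
      ≤ (X ^ 2 + 2 * c * ε * n * X + ε ^ 2 * n ^ 2) * (1 + α) ^ 2 * (t * S) := by
    linarith [claim5, q1, q2]
  have hts : 0 < t * S := by positivity
  have h2 : S ^ 2 + 2 * c * ε * t * S + ε ^ 2 * t ^ 2
      ≤ (X ^ 2 + 2 * c * ε * n * X + ε ^ 2 * n ^ 2) * (1 + α) ^ 2 :=
    le_of_mul_le_mul_right hmain hts
  -- compute the risk at the candidate minimizer
  have hsub : ((1 / (1 + α)) • θhat : EuclideanSpace ℝ (Fin d)) - θhat
      = (1 / (1 + α) - 1) • θhat := by rw [sub_smul, one_smul]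
  have hs1 : (1 : ℝ) / (1 + α) - 1 = -(α / (1 + α)) := by field_simp; ring
  have hnorm1 : ‖((1 / (1 + α)) • θhat : EuclideanSpace ℝ (Fin d)) - θhat‖
      = α / (1 + α) * t := by
    rw [hsub, hs1, norm_smul, Real.norm_eq_abs, abs_neg, abs_of_nonneg (by positivity)]
  have hnorm2 : ‖((1 / (1 + α)) • θhat : EuclideanSpace ℝ (Fin d))‖ = 1 / (1 + α) * t := by
    rw [norm_smul, Real.norm_eq_abs, abs_of_nonneg (by positivity)]
  have hargeq : (α / (1 + α) * t) ^ 2 + σhat2 = (S / (1 + α)) ^ 2 := by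
    rw [div_pow, hS2]; field_simp
  have hsqrtA : Real.sqrt ((α / (1 + α) * t) ^ 2 + σhat2) = S / (1 + α) := by
    rw [hargeq, Real.sqrt_sq (by positivity)]
  show advRisk ε σhat2 θhat ((1 / (1 + α)) • θhat) ≤ advRisk ε σhat2 θhat θ
  rw [advRisk, advRisk, hnorm1, hnorm2, hsqrtA, ← hc_def, ← hn_def, ← hm_def, ← hX_def]
  have hLHS : (α / (1 + α) * t) ^ 2 + σhat2 + 2 * c * ε * (1 / (1 + α) * t) * (S / (1 + α))
      + ε ^ 2 * (1 / (1 + α) * t) ^ 2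
      = (S ^ 2 + 2 * c * ε * t * S + ε ^ 2 * t ^ 2) / (1 + α) ^ 2 := by
    have hσ : σhat2 = (S ^ 2 - t ^ 2 * α ^ 2) / (1 + α) ^ 2 := by
      rw [hS2]; field_simp; ring
    conv_lhs => rw [hσ]
    field_simp
    ring
  rw [hLHS]
  rw [div_le_iff₀ (by positivity : (0:ℝ) < (1 + α) ^ 2)]
  calc S ^ 2 + 2 * c * ε * t * S + ε ^ 2 * t ^ 2
      ≤ (X ^ 2 + 2 * c * ε * n * X + ε ^ 2 * n ^ 2) * (1 + α) ^ 2 := h2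
    _ = (m ^ 2 + σhat2 + 2 * c * ε * n * X + ε ^ 2 * n ^ 2) * (1 + α) ^ 2 := by rw [hX2]
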